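/- Let j : A → X be a closed cofibration and f : A → Y a continuous map of topological spaces, and let P be the pushout of j and f, with co-projections k : X → P and l : Y → P. Then l : Y → P is a closed cofibration. -/

import Mathlib

open unitInterval Topology

universe u

/-- A commutative square of topological spaces
`f : A → Y`, `j : A → X`, `J : Y → Z`, `F : X → Z`
is a pushout square if it commutes and satisfies the universal property of the
pushout in the category of topological spaces. -/
def IsPushoutSquare {A Y X Z : Type u} [TopologicalSpace A] [TopologicalSpace Y]
    [TopologicalSpace X] [TopologicalSpace Z]
    (f : C(A, Y)) (j : C(A, X)) (J : C(Y, Z)) (F : C(X, Z)) : Prop :=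
  (∀ a, J (f a) = F (j a)) ∧
  ∀ (T : Type u) [TopologicalSpace T] (u : C(X, T)) (v : C(Y, T)),
    (∀ a, u (j a) = v (f a)) →
    ∃! w : C(Z, T), (∀ x, w (F x) = u x) ∧ (∀ y, w (J y) = v y)

/-- A continuous map is a closed cofibration if it is a closed embedding and has the
homotopy extension property with respect to every topological space. -/
def IsClosedCofibration {A X : Type u} [TopologicalSpace A] [TopologicalSpace X]
    (j : C(A, X)) : Prop :=
  IsClosedEmbedding j ∧
  ∀ (T : Type u) [TopologicalSpace T] (f : C(X, T)) (G : C(A × I, T)),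
    (∀ a, G (a, 0) = f (j a)) →
    ∃ G' : C(X × I, T), (∀ x, G' (x, 0) = f x) ∧ ∀ a t, G' (j a, t) = G (a, t)

section Aux

variable {A X Y : Type u} [TopologicalSpace A] [TopologicalSpace X] [TopologicalSpace Y]
  (j : C(A, X)) (f : C(A, Y))

/-- The gluing relation for the concrete pushout of `j` and `f`. -/
def pushRel : (X ⊕ Y) → (X ⊕ Y) → Prop :=
  fun s t => ∃ a, s = Sum.inl (j a) ∧ t = Sum.inr (f a)

/-- An invariant of the gluing relation. -/
def pushPsi : (X ⊕ Y) → Set Y :=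
  Sum.elim (fun x => {y | ∃ a, j a = x ∧ f a = y}) (fun y => {y})

theorem pushPsi_eqvGen (hinj : Function.Injective j) {s t : X ⊕ Y}
    (h : Relation.EqvGen (pushRel j f) s t) : pushPsi j f s = pushPsi j f t := by
  induction h with
  | rel s t h =>
    obtain ⟨a, rfl, rfl⟩ := h
    ext y
    simp only [pushPsi, Sum.elim_inl, Sum.elim_inr, Set.mem_setOf_eq, Set.mem_singleton_iff]
    constructor
    · rintro ⟨a', ha', rfl⟩; rw [hinj ha']
    · rintro rfl; exact ⟨a, rfl, rfl⟩
  | refl => rfl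
  | symm _ _ _ ih => exact ih.symm
  | trans _ _ _ _ _ ih1 ih2 => exact ih1.trans ih2

theorem push_inr_inj (hinj : Function.Injective j) {y y' : Y}
    (h : Quot.mk (pushRel j f) (Sum.inr y) = Quot.mk (pushRel j f) (Sum.inr y')) :
    y = y' := by
  have := pushPsi_eqvGen j f hinj (Quot.eq.mp h)
  simpa [pushPsi] using this

theorem push_inl_eq_inr (hinj : Function.Injective j) {x : X} {y : Y} :
    Quot.mk (pushRel j f) (Sum.inl x) = Quot.mk (pushRel j f) (Sum.inr y) ↔
      ∃ a, j a = x ∧ f a = y := by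
  constructor
  · intro h
    have := pushPsi_eqvGen j f hinj (Quot.eq.mp h)
    have hy : y ∈ pushPsi j f (Sum.inl x) := by rw [this]; simp [pushPsi]
    simpa [pushPsi] using hy
  · rintro ⟨a, rfl, rfl⟩
    exact Quot.sound ⟨a, rfl, rfl⟩

theorem push_inr_isClosedEmbedding (hj : IsClosedEmbedding j) :
    IsClosedEmbedding (fun y => Quot.mk (pushRel j f) (Sum.inr y)) := by
  have hinj := hj.injective
  refine IsClosedEmbedding.of_continuous_injective_isClosedMap
    (continuous_quot_mk.comp continuous_inr) (fun y y' h => push_inr_inj j f hinj h) ?_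
  intro C hC
  rw [← isQuotientMap_quot_mk.isClosed_preimage]
  have : Quot.mk (pushRel j f) ⁻¹' ((fun y => Quot.mk (pushRel j f) (Sum.inr y)) '' C) =
      Sum.inl '' (j '' (f ⁻¹' C)) ∪ Sum.inr '' C := by
    ext s
    cases s with
    | inl x =>
      simp only [Set.mem_preimage, Set.mem_image, Set.mem_union]
      constructor
      · rintro ⟨c, hc, hq⟩
        obtain ⟨a, rfl, rfl⟩ := (push_inl_eq_inr j f hinj).mp hq.symm
        exact Or.inl ⟨j a, ⟨a, hc, rfl⟩, rfl⟩
      · rintro (⟨x', ⟨a, ha, rfl⟩, hx⟩ | ⟨c, _, hx⟩)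
        · obtain rfl := Sum.inl.inj hx
          exact ⟨f a, ha, ((push_inl_eq_inr j f hinj).mpr ⟨a, rfl, rfl⟩).symm⟩
        · exact absurd hx (by simp)
    | inr y =>
      simp only [Set.mem_preimage, Set.mem_image, Set.mem_union]
      constructor
      · rintro ⟨c, hc, hq⟩
        have := push_inr_inj j f hinj hq.symm
        exact Or.inr ⟨c, hc, by rw [this]⟩
      · rintro (⟨x', _, hx⟩ | ⟨c, hc, hx⟩)
        · exact absurd hx (by simp)
        · obtain rfl : c = y := Sum.inr.inj hx
          exact ⟨c, hc, rfl⟩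
  rw [this, isClosed_sum_iff]
  constructor
  · have : Sum.inl ⁻¹' (Sum.inl '' (j '' (f ⁻¹' C)) ∪ Sum.inr '' C : Set (X ⊕ Y)) =
        j '' (f ⁻¹' C) := by
      ext x; simp
    rw [this]
    exact hj.isClosedMap _ (hC.preimage f.continuous)
  · have : Sum.inr ⁻¹' (Sum.inl '' (j '' (f ⁻¹' C)) ∪ Sum.inr '' C : Set (X ⊕ Y)) = C := by
      ext y; simp
    rw [this]
    exact hC

end Aux

/-- Closed cofibrations are stable under cobase change: if `j : A → X` is a closed
cofibration, `f : A → Y` is continuous, and `P` is the pushout of `j` and `f` with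
co-projections `k : X → P` and `l : Y → P`, then `l` is a closed cofibration. -/
theorem isClosedCofibration_pushout
    {A X Y P : Type u} [TopologicalSpace A] [TopologicalSpace X] [TopologicalSpace Y]
    [TopologicalSpace P]
    (j : C(A, X)) (f : C(A, Y)) (k : C(X, P)) (l : C(Y, P))
    (hj : IsClosedCofibration j) (hsq : IsPushoutSquare f j l k) :
    IsClosedCofibration l := by
  obtain ⟨hje, hjh⟩ := hj
  obtain ⟨hcomm, huniv⟩ := hsq
  have hinj := hje.injective
  -- joint surjectivity of k and l
  have hsurj : ∀ p : P, (∃ x, k x = p) ∨ ∃ y, l y = p := by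
    letI : TopologicalSpace (ULift.{u} Prop) := ⊤
    have hc : ∀ {Z : Type u} [TopologicalSpace Z] (g : Z → ULift.{u} Prop), Continuous g := by
      intro Z _ g
      rw [continuous_iff_coinduced_le]
      exact le_top
    obtain ⟨w, hw, hwu⟩ := huniv (ULift.{u} Prop) ⟨fun _ => ⟨True⟩, hc _⟩
      ⟨fun _ => ⟨True⟩, hc _⟩ (fun _ => rfl)
    have h1 : (⟨fun _ => ⟨True⟩, hc _⟩ : C(P, ULift.{u} Prop)) = w :=
      hwu _ ⟨fun _ => rfl, fun _ => rfl⟩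
    have h2 : (⟨fun p => ⟨(∃ x, k x = p) ∨ ∃ y, l y = p⟩, hc _⟩ : C(P, ULift.{u} Prop)) = w :=
      hwu _ ⟨fun x => congrArg ULift.up (eq_true (Or.inl ⟨x, rfl⟩)),
        fun y => congrArg ULift.up (eq_true (Or.inr ⟨y, rfl⟩))⟩
    intro p
    have := congrArg (fun w : C(P, ULift.{u} Prop) => (w p).down) (h2.trans h1.symm)
    simpa using this.symm
  constructor
  · -- closed embedding part, via comparison with the concrete pushout
    obtain ⟨w, hw, -⟩ := huniv (Quot (pushRel j f))
      ⟨fun x => Quot.mk _ (Sum.inl x), continuous_quot_mk.comp continuous_inl⟩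
      ⟨fun y => Quot.mk _ (Sum.inr y), continuous_quot_mk.comp continuous_inr⟩
      (fun a => Quot.sound ⟨a, rfl, rfl⟩)
    have hlift : ∀ s t, pushRel j f s t → Sum.elim k l s = Sum.elim k l t := by
      rintro s t ⟨a, rfl, rfl⟩
      exact (hcomm a).symm
    set w' : C(Quot (pushRel j f), P) :=
      ⟨Quot.lift (Sum.elim k l) hlift,
        isQuotientMap_quot_mk.continuous_iff.mpr (k.continuous.sumElim l.continuous)⟩ with hw'
    have hright : ∀ q, w (w' q) = q := by
      refine Quot.ind ?_
      rintro (x | y)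
      · exact hw.1 x
      · exact hw.2 y
    have hleft : ∀ p, w' (w p) = p := by
      intro p
      rcases hsurj p with ⟨x, rfl⟩ | ⟨y, rfl⟩
      · rw [hw.1 x]; rfl
      · rw [hw.2 y]; rfl
    have hl : (l : Y → P) = ⇑w' ∘ fun y => Quot.mk (pushRel j f) (Sum.inr y) := by
      funext y
      rw [hw']
      rfl
    have : IsClosedEmbedding (⇑w') := by
      exact (Homeomorph.mk ⟨⇑w', ⇑w, hright, hleft⟩ w'.continuous w.continuous).isClosedEmbedding
    rw [hl]
    exact this.comp (push_inr_isClosedEmbedding j f hje)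
  · -- homotopy extension property
    intro T _ φ G hG0
    obtain ⟨G', hG'0, hG'j⟩ := hjh T (φ.comp k)
      (G.comp ((f.prodMap (ContinuousMap.id I))))
      (fun a => by
        simp only [ContinuousMap.comp_apply, ContinuousMap.prodMap_apply,
          ContinuousMap.id_apply, Prod.map_apply]
        rw [hG0 (f a), hcomm a])
    obtain ⟨w, hw, -⟩ := huniv (C(I, T)) G'.curry G.curry
      (fun a => by
        ext t
        simpa using hG'j a t)
    refine ⟨w.uncurry, ?_, ?_⟩
    · intro p
      rcases hsurj p with ⟨x, rfl⟩ | ⟨y, rfl⟩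
      · show (w (k x)) 0 = φ (k x)
        rw [hw.1 x]
        simpa using hG'0 x
      · show (w (l y)) 0 = φ (l y)
        rw [hw.2 y]
        simpa using hG0 y
    · intro y t
      show (w (l y)) t = G (y, t)
      rw [hw.2 y]
      simp
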